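/- Theorem 1: Let k be an algebraically closed field and let q₁, …, q_m be homogeneous quadratic polynomials in the variables X₁, …, X_n over k. Then there exist natural numbers a, b and a reduced matrix pencil P = (a, b; α₁, …, α_n) together with a bijection from the set ε(P) of equivalence classes of eigenvectors of P onto the projective zero set {(λ₁ : … : λ_n) ∈ ℙ(k^n) : q_j(λ₁, …, λ_n) = 0 for all j = 1, …, m}, which sends the class of an eigenvector v to the eigenvalue of v, i.e., to the point (λ₁ : … : λ_n) determined by α_i(v) = λ_i w for all i, where w is a nonzero element of the line ⟨α₁(v), …, α_n(v)⟩. -/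

import Mathlib

/-!
A matrix pencil `P = (a, b; α₁, …, α_n)` over `k` is a family of `n` linear maps
`α_i : k^a → k^b`.  It is reduced if `⋂_i ker α_i = 0`.  A (nonzero) vector
`v ∈ k^a` is an eigenvector of `P` if `span{α₁(v), …, α_n(v)} ⊆ k^b` is
one-dimensional; eigenvectors are equivalent iff they are proportional, so the
set `ε(P)` of equivalence classes of eigenvectors is a subset of `ℙ(k^a)`.
If `v` is an eigenvector and `w ≠ 0` with `α_i(v) = λ_i w` for all `i`, the
point `(λ₁ : … : λ_n) ∈ ℙ(k^n)` is the eigenvalue of `v`.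
-/

open Module Submodule

namespace EigenvectorVarietyAux

open Finsupp MvPolynomial

variable {k : Type*} [Field k] {n m : ℕ}

/-- index type for the source space: entries of an `n × n` matrix -/
abbrev aA (n : ℕ) : ℕ := Fintype.card (Fin n × Fin n)

/-- constraints index: symmetry constraints plus one constraint per quadric -/
abbrev Stype (n m : ℕ) := (Fin n × Fin n) ⊕ Fin m

/-- index type for the target space -/
abbrev Btype (n m : ℕ) := (Fin n) ⊕ (Stype n m ⊕ Stype n m)

abbrev bB (n m : ℕ) : ℕ := Fintype.card (Btype n m)

noncomputable def eA (n : ℕ) : (Fin n × Fin n) ≃ Fin (aA n) := Fintype.equivFin _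
noncomputable def eB (n m : ℕ) : Btype n m ≃ Fin (bB n m) := Fintype.equivFin _

/-- the matrix encoded by a vector -/
noncomputable def Zm (v : Fin (aA n) → k) (p r : Fin n) : k := v (eA n (p, r))

/-- coefficient matrix of a quadratic polynomial -/
noncomputable def Cq (Q : Fin m → MvPolynomial (Fin n) k) (j : Fin m) (p r : Fin n) : k :=
  if p ≤ r then MvPolynomial.coeff (single p 1 + single r 1) (Q j) else 0

/-- the linear constraints -/
noncomputable def psiF (Q : Fin m → MvPolynomial (Fin n) k) (v : Fin (aA n) → k) :
    Stype n m → k :=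
  Sum.elim (fun pr => Zm v pr.1 pr.2 - Zm v pr.2 pr.1)
    (fun j => ∑ p, ∑ r, Cq Q j p r * Zm v p r)

noncomputable def Gf (Q : Fin m → MvPolynomial (Fin n) k) (i₀ i₁ i : Fin n)
    (v : Fin (aA n) → k) : Btype n m → k :=
  Sum.elim (fun p => Zm v i p)
    (Sum.elim (fun s => if i = i₀ then psiF Q v s else 0)
      (fun s => if i = i₁ then psiF Q v s else 0))

lemma Zm_add (v v' : Fin (aA n) → k) (p r : Fin n) :
    Zm (v + v') p r = Zm v p r + Zm v' p r := rfl

lemma Zm_smul (c : k) (v : Fin (aA n) → k) (p r : Fin n) :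
    Zm (c • v) p r = c * Zm v p r := rfl

lemma psiF_add (Q : Fin m → MvPolynomial (Fin n) k) (v v' : Fin (aA n) → k) (s : Stype n m) :
    psiF Q (v + v') s = psiF Q v s + psiF Q v' s := by
  rcases s with pr | j
  · simp only [psiF, Sum.elim_inl, Zm_add]; ring
  · simp only [psiF, Sum.elim_inr, Zm_add, mul_add, Finset.sum_add_distrib]

lemma psiF_smul (Q : Fin m → MvPolynomial (Fin n) k) (c : k) (v : Fin (aA n) → k)
    (s : Stype n m) : psiF Q (c • v) s = c * psiF Q v s := by
  rcases s with pr | j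
  · simp only [psiF, Sum.elim_inl, Zm_smul]; ring
  · simp only [psiF, Sum.elim_inr, Zm_smul, Finset.mul_sum]
    congr 1; funext p; congr 1; funext r; ring

lemma Gf_add (Q : Fin m → MvPolynomial (Fin n) k) (i₀ i₁ i : Fin n) (v v' : Fin (aA n) → k)
    (t : Btype n m) : Gf Q i₀ i₁ i (v + v') t = Gf Q i₀ i₁ i v t + Gf Q i₀ i₁ i v' t := by
  rcases t with p | s | s
  · simp [Gf, Zm_add]
  · simp only [Gf, Sum.elim_inl, Sum.elim_inr, psiF_add]
    by_cases h : i = i₀ <;> simp [h]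
  · simp only [Gf, Sum.elim_inl, Sum.elim_inr, psiF_add]
    by_cases h : i = i₁ <;> simp [h]

lemma Gf_smul (Q : Fin m → MvPolynomial (Fin n) k) (i₀ i₁ i : Fin n) (c : k)
    (v : Fin (aA n) → k) (t : Btype n m) :
    Gf Q i₀ i₁ i (c • v) t = c * Gf Q i₀ i₁ i v t := by
  rcases t with p | s | s
  · simp [Gf, Zm_smul]
  · simp only [Gf, Sum.elim_inl, Sum.elim_inr, psiF_smul]
    by_cases h : i = i₀ <;> simp [h]
  · simp only [Gf, Sum.elim_inl, Sum.elim_inr, psiF_smul]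
    by_cases h : i = i₁ <;> simp [h]

/-- the matrix pencil -/
noncomputable def alphaF (Q : Fin m → MvPolynomial (Fin n) k) (i₀ i₁ i : Fin n) :
    (Fin (aA n) → k) →ₗ[k] (Fin (bB n m) → k) where
  toFun v c := Gf Q i₀ i₁ i v ((eB n m).symm c)
  map_add' v v' := by funext c; exact Gf_add Q i₀ i₁ i v v' _
  map_smul' c v := by funext cc; exact Gf_smul Q i₀ i₁ i c v _

@[simp] lemma alphaF_apply_inl (Q : Fin m → MvPolynomial (Fin n) k) (i₀ i₁ i : Fin n)
    (v : Fin (aA n) → k) (p : Fin n) :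
    alphaF Q i₀ i₁ i v (eB n m (Sum.inl p)) = Zm v i p := by
  simp [alphaF, Gf]

@[simp] lemma alphaF_apply_mid (Q : Fin m → MvPolynomial (Fin n) k) (i₀ i₁ i : Fin n)
    (v : Fin (aA n) → k) (s : Stype n m) :
    alphaF Q i₀ i₁ i v (eB n m (Sum.inr (Sum.inl s)))
      = if i = i₀ then psiF Q v s else 0 := by
  simp [alphaF, Gf]

@[simp] lemma alphaF_apply_last (Q : Fin m → MvPolynomial (Fin n) k) (i₀ i₁ i : Fin n)
    (v : Fin (aA n) → k) (s : Stype n m) :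
    alphaF Q i₀ i₁ i v (eB n m (Sum.inr (Sum.inr s)))
      = if i = i₁ then psiF Q v s else 0 := by
  simp [alphaF, Gf]

lemma v_eq_Zm (v : Fin (aA n) → k) (idx : Fin (aA n)) :
    v idx = Zm v ((eA n).symm idx).1 ((eA n).symm idx).2 := by
  simp [Zm]



lemma exists_pair {n : ℕ} (d : Fin n →₀ ℕ) (hd : d.degree = 2) :
    ∃ p r : Fin n, p ≤ r ∧ d = single p 1 + single r 1 := by
  have hc : Multiset.card (Finsupp.toMultiset d) = 2 := by
    rw [Finsupp.card_toMultiset]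
    simpa [Finsupp.degree_apply, Finsupp.sum] using hd
  obtain ⟨x, y, hxy⟩ := Multiset.card_eq_two.mp hc
  have hd' : d = single x 1 + single y 1 := by
    have h2 := congrArg Multiset.toFinsupp hxy
    rw [Finsupp.toMultiset_toFinsupp] at h2
    rw [h2]
    have h3 : ({x, y} : Multiset (Fin n)) = {x} + {y} := rfl
    rw [h3, Multiset.toFinsupp_add, Multiset.toFinsupp_singleton,
      Multiset.toFinsupp_singleton]
  rcases le_total x y with h | h
  · exact ⟨x, y, h, hd'⟩
  · exact ⟨y, x, h, by rw [hd', add_comm]⟩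

lemma prod_pow_single {k : Type*} [CommRing k] {n : ℕ} (lam : Fin n → k) (p : Fin n) :
    (∏ i, lam i ^ (single p (1:ℕ)) i) = lam p := by
  rw [Finset.prod_eq_single p]
  · simp
  · intro i _ hip
    rw [Finsupp.single_eq_of_ne' (Ne.symm hip), pow_zero]
  · intro h; exact absurd (Finset.mem_univ p) h

lemma prod_pow_pair {k : Type*} [CommRing k] {n : ℕ} (lam : Fin n → k) (p r : Fin n) :
    (∏ i, lam i ^ (single p 1 + single r 1 : Fin n →₀ ℕ) i) = lam p * lam r := by
  have : ∀ i, lam i ^ (single p 1 + single r 1 : Fin n →₀ ℕ) i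
      = lam i ^ (single p (1:ℕ)) i * lam i ^ (single r (1:ℕ)) i := by
    intro i; rw [Finsupp.add_apply, pow_add]
  rw [Finset.prod_congr rfl (fun i _ => this i), Finset.prod_mul_distrib,
    prod_pow_single, prod_pow_single]

lemma pair_inj {n : ℕ} {p r p' r' : Fin n} (hpr : p ≤ r) (h' : p' ≤ r')
    (h : single p 1 + single r 1 = single p' 1 + single r' 1) : p = p' ∧ r = r' := by
  have hm := congrArg Finsupp.toMultiset h
  rw [Finsupp.toMultiset_add, Finsupp.toMultiset_add] at hm
  simp only [Finsupp.toMultiset_single, one_smul] at hm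
  have h2 : ({p, r} : Multiset (Fin n)) = {p', r'} := hm
  have hp' : p' = p ∨ p' = r := by
    have : p' ∈ ({p, r} : Multiset (Fin n)) := by rw [h2]; simp
    simpa using this
  rcases hp' with h3 | h3
  · subst h3
    have : r = r' := by
      have := (Multiset.cons_inj_right p').mp h2
      simpa using this
    exact ⟨rfl, this⟩
  · subst h3
    have h4 : ({p', p} : Multiset (Fin n)) = {p', r'} := by
      rw [← h2]; exact Multiset.cons_swap p' p 0
    have hpr' : p = r' := by
      have := (Multiset.cons_inj_right p').mp h4
      simpa using this
    subst hpr'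
    exact ⟨le_antisymm hpr h', le_antisymm h' hpr⟩

lemma eval_quadform {k : Type*} [CommRing k] {n : ℕ} (f : MvPolynomial (Fin n) k)
    (hf : f.IsHomogeneous 2) (lam : Fin n → k) :
    MvPolynomial.eval lam f
      = ∑ p : Fin n, ∑ r : Fin n,
          (if p ≤ r then f.coeff (single p 1 + single r 1) else 0) * (lam p * lam r) := by
  classical
  set T : Finset (Fin n × Fin n) := Finset.univ.filter (fun pr => pr.1 ≤ pr.2) with hT
  have hrhs : (∑ p : Fin n, ∑ r : Fin n,
      (if p ≤ r then f.coeff (single p 1 + single r 1) else 0) * (lam p * lam r))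
      = ∑ pr ∈ T, f.coeff (single pr.1 1 + single pr.2 1) * (lam pr.1 * lam pr.2) := by
    rw [← Finset.sum_product']
    rw [hT, Finset.sum_filter]
    apply Finset.sum_congr rfl
    intro pr _
    by_cases h : pr.1 ≤ pr.2 <;> simp [h]
  rw [hrhs]
  -- index by image
  set D : Fin n × Fin n → (Fin n →₀ ℕ) := fun pr => single pr.1 1 + single pr.2 1 with hD
  have hinj : ∀ x ∈ T, ∀ y ∈ T, D x = D y → x = y := by
    intro x hx y hy hxy
    have hx' : x.1 ≤ x.2 := (Finset.mem_filter.mp hx).2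
    have hy' : y.1 ≤ y.2 := (Finset.mem_filter.mp hy).2
    obtain ⟨h1, h2⟩ := pair_inj hx' hy' hxy
    exact Prod.ext h1 h2
  have himg : (∑ d ∈ Finset.image D T, f.coeff d * ∏ i, lam i ^ d i)
      = ∑ pr ∈ T, f.coeff (D pr) * ∏ i, lam i ^ (D pr) i := Finset.sum_image hinj
  have hprod : ∀ pr : Fin n × Fin n, (∏ i, lam i ^ (D pr) i) = lam pr.1 * lam pr.2 :=
    fun pr => prod_pow_pair lam pr.1 pr.2
  rw [eval_eq']
  have hsub : f.support ⊆ Finset.image D T := by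
    intro d hd
    have hdeg : d.degree = 2 := by
      have := hf (MvPolynomial.mem_support_iff.mp hd)
      rw [Finsupp.degree_eq_weight_one]; exact this
    obtain ⟨p, r, hpr, hdpr⟩ := exists_pair d hdeg
    exact Finset.mem_image.mpr ⟨(p, r), Finset.mem_filter.mpr ⟨Finset.mem_univ _, hpr⟩, hdpr.symm⟩
  rw [Finset.sum_subset hsub (fun d _ hd => by
    rw [MvPolynomial.notMem_support_iff.mp hd, zero_mul])]
  rw [himg]
  exact Finset.sum_congr rfl (fun pr _ => by rw [hprod pr])

lemma span_rank_one {W : Type*} [AddCommGroup W] [Module k W] {f : Fin n → W}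
    (h : finrank k (span k (Set.range f)) = 1) :
    ∃ w : W, w ≠ 0 ∧ ∃ lam : Fin n → k, lam ≠ 0 ∧ ∀ i, f i = lam i • w := by
  classical
  obtain ⟨v0, hv0, hgen⟩ := finrank_eq_one_iff'.mp h
  refine ⟨(v0 : W), by simpa using hv0, ?_⟩
  have hmem : ∀ i, f i ∈ span k (Set.range f) := fun i => subset_span (Set.mem_range_self i)
  set lam : Fin n → k := fun i => (hgen ⟨f i, hmem i⟩).choose with hlam
  have hdec : ∀ i, f i = lam i • (v0 : W) := by
    intro i
    have := (hgen ⟨f i, hmem i⟩).choose_spec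
    have := congrArg (Subtype.val) this
    simpa [lam, eq_comm] using this
  refine ⟨lam, ?_, hdec⟩
  intro h0
  have hfz : ∀ i, f i = 0 := by
    intro i; rw [hdec i, h0]; simp
  have : span k (Set.range f) = ⊥ := by
    rw [Submodule.span_eq_bot]
    rintro x ⟨i, rfl⟩; exact hfz i
  rw [this] at h
  simp at h


lemma eigen_unique {W : Type*} [AddCommGroup W] [Module k W] {f : Fin n → W}
    {lam mu : Fin n → k} {w w' : W} (hw : w ≠ 0) (hw' : w' ≠ 0) (hlam : lam ≠ 0)
    (h1 : ∀ i, f i = lam i • w) (h2 : ∀ i, f i = mu i • w') :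
    ∃ t : k, t ≠ 0 ∧ ∀ i, mu i = t * lam i := by
  obtain ⟨i₀, hi₀'⟩ := Function.ne_iff.mp hlam
  have hi₀ : lam i₀ ≠ 0 := by simpa using hi₀'
  have hne : f i₀ ≠ 0 := by rw [h1 i₀]; exact smul_ne_zero hi₀ hw
  have hmu0 : mu i₀ ≠ 0 := by
    intro h0
    rw [h2 i₀, h0, zero_smul] at hne; exact hne rfl
  have hkey : ∀ i, lam i • w = mu i • w' := fun i => (h1 i).symm.trans (h2 i)
  have hw'eq : w' = ((mu i₀)⁻¹ * lam i₀) • w := by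
    have h3 : (mu i₀)⁻¹ • (lam i₀ • w) = (mu i₀)⁻¹ • (mu i₀ • w') := by rw [hkey i₀]
    rw [smul_smul, smul_smul, inv_mul_cancel₀ hmu0, one_smul] at h3
    exact h3.symm
  refine ⟨mu i₀ * (lam i₀)⁻¹, by simp [hmu0, hi₀], ?_⟩
  intro i
  have h4 : lam i • w = (mu i * ((mu i₀)⁻¹ * lam i₀)) • w := by
    rw [hkey i, hw'eq, smul_smul]
  have h5 : (lam i - mu i * ((mu i₀)⁻¹ * lam i₀)) • w = 0 := by
    rw [sub_smul, h4, sub_self]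
  have hsc : lam i = mu i * ((mu i₀)⁻¹ * lam i₀) := by
    rcases smul_eq_zero.mp h5 with h6 | h6
    · exact sub_eq_zero.mp h6
    · exact absurd h6 hw
  field_simp at hsc
  field_simp
  rw [mul_comm (mu i) (lam i₀)] at hsc ⊢
  rw [← hsc]; ring

set_option linter.unusedSectionVars false
set_option maxHeartbeats 1000000

variable (Q : Fin m → MvPolynomial (Fin n) k) (i₀ i₁ : Fin n)

lemma psi0_of_ne (hne : i₀ ≠ i₁) (v : Fin (aA n) → k) (lam : Fin n → k)
    (w : Fin (bB n m) → k) (hdec : ∀ i, alphaF Q i₀ i₁ i v = lam i • w) :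
    ∀ s, psiF Q v s = 0 := by
  intro s
  have hmid : ∀ i, (if i = i₀ then psiF Q v s else 0)
      = lam i * w (eB n m (Sum.inr (Sum.inl s))) := by
    intro i
    have := congrFun (hdec i) (eB n m (Sum.inr (Sum.inl s)))
    simpa using this
  have hlast : ∀ i, (if i = i₁ then psiF Q v s else 0)
      = lam i * w (eB n m (Sum.inr (Sum.inr s))) := by
    intro i
    have := congrFun (hdec i) (eB n m (Sum.inr (Sum.inr s)))
    simpa using this
  have e1 : psiF Q v s = lam i₀ * w (eB n m (Sum.inr (Sum.inl s))) := by
    have := hmid i₀; simpa using this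
  have e2 : (0 : k) = lam i₁ * w (eB n m (Sum.inr (Sum.inl s))) := by
    have := hmid i₁; simpa [Ne.symm hne, hne] using this
  have e3 : psiF Q v s = lam i₁ * w (eB n m (Sum.inr (Sum.inr s))) := by
    have := hlast i₁; simpa using this
  have e4 : (0 : k) = lam i₀ * w (eB n m (Sum.inr (Sum.inr s))) := by
    have := hlast i₀; simpa [hne] using this
  have hsq : psiF Q v s * psiF Q v s = 0 := by
    nth_rewrite 2 [e3]
    nth_rewrite 1 [e1]
    calc lam i₀ * w (eB n m (Sum.inr (Sum.inl s))) * (lam i₁ * w (eB n m (Sum.inr (Sum.inr s))))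
        = (lam i₁ * w (eB n m (Sum.inr (Sum.inl s)))) * (lam i₀ * w (eB n m (Sum.inr (Sum.inr s)))) := by ring
      _ = 0 := by rw [← e2, zero_mul]
  exact mul_self_eq_zero.mp hsq

lemma decomp (hq : ∀ j, (Q j).IsHomogeneous 2) {v : Fin (aA n) → k} {lam : Fin n → k}
    {w : Fin (bB n m) → k} (hv : v ≠ 0) (hlam : lam ≠ 0)
    (hdec : ∀ i, alphaF Q i₀ i₁ i v = lam i • w) (hpsi : ∀ s, psiF Q v s = 0) :
    ∃ c : k, c ≠ 0 ∧ (∀ p r, Zm v p r = c * (lam p * lam r))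
      ∧ ∀ j, MvPolynomial.eval lam (Q j) = 0 := by
  classical
  set w1 : Fin n → k := fun p => w (eB n m (Sum.inl p)) with hw1def
  have hZ : ∀ i p, Zm v i p = lam i * w1 p := by
    intro i p
    have := congrFun (hdec i) (eB n m (Sum.inl p))
    rw [hw1def]
    simpa using this
  have hsym : ∀ p r, Zm v p r = Zm v r p := by
    intro p r
    have := hpsi (Sum.inl (p, r))
    simpa [psiF, sub_eq_zero] using this
  obtain ⟨i₀', hi₀'⟩ := Function.ne_iff.mp hlam
  have hli : lam i₀' ≠ 0 := by simpa using hi₀'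
  set c : k := w1 i₀' / lam i₀' with hc
  have hw1 : ∀ p, w1 p = lam p * c := by
    intro p
    have h1 : lam i₀' * w1 p = Zm v i₀' p := (hZ i₀' p).symm
    have h2 : Zm v i₀' p = Zm v p i₀' := hsym i₀' p
    have h3 : Zm v p i₀' = lam p * w1 i₀' := hZ p i₀'
    have h4 : lam i₀' * w1 p = lam p * w1 i₀' := by rw [h1, h2, h3]
    rw [hc]
    field_simp
    linear_combination h4
  have hZc : ∀ p r, Zm v p r = c * (lam p * lam r) := by
    intro p r
    rw [hZ p r, hw1 r]; ring
  have hc0 : c ≠ 0 := by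
    obtain ⟨idx, hidx⟩ := Function.ne_iff.mp hv
    have : v idx ≠ 0 := by simpa using hidx
    rw [v_eq_Zm v idx, hZc] at this
    intro h0; rw [h0] at this; simp at this
  refine ⟨c, hc0, hZc, ?_⟩
  intro j
  have h0 := hpsi (Sum.inr j)
  have heq : (0:k) = c * ∑ p : Fin n, ∑ r : Fin n, Cq Q j p r * (lam p * lam r) := by
    rw [Finset.mul_sum]
    rw [← h0]
    simp only [psiF, Sum.elim_inr]
    apply Finset.sum_congr rfl
    intro p _
    rw [Finset.mul_sum]
    apply Finset.sum_congr rfl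
    intro r _
    rw [hZc]; ring
  have hqf := eval_quadform (Q j) (hq j) lam
  have : MvPolynomial.eval lam (Q j)
      = ∑ p : Fin n, ∑ r : Fin n, Cq Q j p r * (lam p * lam r) := hqf
  rw [this]
  have := heq.symm
  rcases mul_eq_zero.mp this with h | h
  · exact absurd h hc0
  · exact h

lemma backward (hq : ∀ j, (Q j).IsHomogeneous 2) {lam : Fin n → k} (hlam : lam ≠ 0)
    (hzero : ∀ j, MvPolynomial.eval lam (Q j) = 0) :
    ∃ (v : Fin (aA n) → k) (hv : v ≠ 0) (w : Fin (bB n m) → k) (hw : w ≠ 0),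
      (∀ p r, Zm v p r = lam p * lam r)
      ∧ (∀ i, alphaF Q i₀ i₁ i v = lam i • w)
      ∧ finrank k (span k (Set.range fun i => alphaF Q i₀ i₁ i v)) = 1 := by
  classical
  obtain ⟨p₀, hp₀'⟩ := Function.ne_iff.mp hlam
  have hp₀ : lam p₀ ≠ 0 := by simpa using hp₀'
  set v : Fin (aA n) → k := fun idx => lam ((eA n).symm idx).1 * lam ((eA n).symm idx).2
    with hvdef
  have hZ : ∀ p r, Zm v p r = lam p * lam r := by
    intro p r; simp [Zm, hvdef]
  have hv : v ≠ 0 := by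
    intro h0
    have := congrFun h0 (eA n (p₀, p₀))
    rw [hvdef] at this
    simp only [Equiv.symm_apply_apply, Pi.zero_apply] at this
    exact hp₀ (by rcases mul_eq_zero.mp this with h | h <;> exact h)
  have hpsi : ∀ s, psiF Q v s = 0 := by
    intro s
    rcases s with pr | j
    · simp [psiF, hZ]; ring
    · simp only [psiF, Sum.elim_inr]
      have : ∀ p r : Fin n, Cq Q j p r * Zm v p r = Cq Q j p r * (lam p * lam r) := by
        intro p r; rw [hZ]
      rw [Finset.sum_congr rfl (fun p _ => Finset.sum_congr rfl (fun r _ => this p r))]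
      have h5 : (∑ p : Fin n, ∑ r : Fin n, Cq Q j p r * (lam p * lam r))
          = MvPolynomial.eval lam (Q j) := (eval_quadform (Q j) (hq j) lam).symm
      rw [h5]
      exact hzero j
  set w : Fin (bB n m) → k :=
    fun c => Sum.elim (fun p => lam p) (fun _ => (0:k)) ((eB n m).symm c) with hwdef
  have hwinl : ∀ p, w (eB n m (Sum.inl p)) = lam p := by
    intro p; simp [hwdef]
  have hw : w ≠ 0 := by
    intro h0
    have := congrFun h0 (eB n m (Sum.inl p₀))
    rw [hwinl p₀] at this
    exact hp₀ this
  have hdec : ∀ i, alphaF Q i₀ i₁ i v = lam i • w := by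
    intro i
    funext c
    have hc : c = eB n m ((eB n m).symm c) := (Equiv.apply_symm_apply _ _).symm
    rw [hc]
    rcases (eB n m).symm c with p | s | s
    · rw [alphaF_apply_inl, hZ]
      simp [hwdef]
    · rw [alphaF_apply_mid]
      simp only [Pi.smul_apply, smul_eq_mul, hwdef]
      simp only [Equiv.symm_apply_apply, Sum.elim_inr, mul_zero]
      rw [hpsi s]; simp
    · rw [alphaF_apply_last]
      simp only [Pi.smul_apply, smul_eq_mul, hwdef]
      simp only [Equiv.symm_apply_apply, Sum.elim_inr, mul_zero]
      rw [hpsi s]; simp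
  refine ⟨v, hv, w, hw, hZ, hdec, ?_⟩
  have hspan : span k (Set.range fun i => alphaF Q i₀ i₁ i v) = span k {w} := by
    apply le_antisymm
    · rw [Submodule.span_le]
      rintro x ⟨i, rfl⟩
      show alphaF Q i₀ i₁ i v ∈ span k {w}
      rw [hdec i]
      exact Submodule.smul_mem _ _ (Submodule.mem_span_singleton_self w)
    · rw [Submodule.span_le]
      rintro x hx
      rw [Set.mem_singleton_iff.mp hx]
      have : w = (lam p₀)⁻¹ • (alphaF Q i₀ i₁ p₀ v) := by
        rw [hdec p₀, smul_smul, inv_mul_cancel₀ hp₀, one_smul]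
      rw [this]
      exact Submodule.smul_mem _ _ (subset_span (Set.mem_range_self p₀))
  rw [hspan]
  exact finrank_span_singleton hw


lemma main (hq : ∀ j, (Q j).IsHomogeneous 2)
    (hforce : ∀ (v : Fin (aA n) → k) (lam : Fin n → k) (w : Fin (bB n m) → k),
      (∀ i, alphaF Q i₀ i₁ i v = lam i • w) → ∀ s, psiF Q v s = 0) :
    ∃ (a b : ℕ) (α : Fin n → ((Fin a → k) →ₗ[k] (Fin b → k))),
      (⨅ i, LinearMap.ker (α i)) = ⊥ ∧
      ∃ F : {x : Projectivization k (Fin a → k) |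
                ∃ (v : Fin a → k) (hv : v ≠ 0), Projectivization.mk k v hv = x ∧
                  finrank k (span k (Set.range fun i => α i v)) = 1} ≃
            {y : Projectivization k (Fin n → k) |
                ∀ (lam : Fin n → k) (hlam : lam ≠ 0),
                  Projectivization.mk k lam hlam = y →
                  ∀ j, MvPolynomial.eval lam (Q j) = 0},
        ∀ (x : {x : Projectivization k (Fin a → k) |
                ∃ (v : Fin a → k) (hv : v ≠ 0), Projectivization.mk k v hv = x ∧
                  finrank k (span k (Set.range fun i => α i v)) = 1})
          (v : Fin a → k) (hv : v ≠ 0),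
          Projectivization.mk k v hv = (x : Projectivization k (Fin a → k)) →
          ∀ (lam : Fin n → k) (hlam : lam ≠ 0),
            Projectivization.mk k lam hlam = (F x : Projectivization k (Fin n → k)) →
            ∃ w : Fin b → k, w ≠ 0 ∧ ∀ i, α i v = lam i • w := by
  classical
  refine ⟨aA n, bB n m, fun i => alphaF Q i₀ i₁ i, ?_, ?_⟩
  · rw [eq_bot_iff]
    intro v hv
    simp only [Submodule.mem_iInf, LinearMap.mem_ker] at hv
    have hv0 : v = 0 := by
      funext idx
      rw [v_eq_Zm v idx]
      have := congrFun (hv ((eA n).symm idx).1) (eB n m (Sum.inl ((eA n).symm idx).2))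
      simpa using this
    rw [Submodule.mem_bot]
    exact hv0
  · have hsmul : ∀ (t : k) (lam : Fin n → k) (j : Fin m),
        MvPolynomial.eval (t • lam) (Q j) = t^2 * MvPolynomial.eval lam (Q j) := by
      intro t lam j
      rw [eval_quadform (Q j) (hq j), eval_quadform (Q j) (hq j) lam, Finset.mul_sum]
      apply Finset.sum_congr rfl; intro p _
      rw [Finset.mul_sum]
      apply Finset.sum_congr rfl; intro r _
      simp only [Pi.smul_apply, smul_eq_mul]
      ring
    set XT := {x : Projectivization k (Fin (aA n) → k) |
        ∃ (v : Fin (aA n) → k) (hv : v ≠ 0), Projectivization.mk k v hv = x ∧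
          finrank k (span k (Set.range fun i => alphaF Q i₀ i₁ i v)) = 1} with hXT
    set YT := {y : Projectivization k (Fin n → k) |
        ∀ (lam : Fin n → k) (hlam : lam ≠ 0), Projectivization.mk k lam hlam = y →
          ∀ j, MvPolynomial.eval lam (Q j) = 0} with hYT
    set Rel : XT → YT → Prop := fun x y =>
      ∃ (v : Fin (aA n) → k) (hv : v ≠ 0) (lam : Fin n → k) (hlam : lam ≠ 0)
        (w : Fin (bB n m) → k), w ≠ 0 ∧ Projectivization.mk k v hv = x.1 ∧
          Projectivization.mk k lam hlam = y.1 ∧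
          ∀ i, alphaF Q i₀ i₁ i v = lam i • w with hRel
    have hA : ∀ x : XT, ∃ y : YT, Rel x y := by
      intro x
      obtain ⟨v, hv, hmkx, hrank⟩ := x.2
      obtain ⟨w, hw, lam, hlam, hdec⟩ := span_rank_one hrank
      have hz : ∀ j, MvPolynomial.eval lam (Q j) = 0 := by
        obtain ⟨c, hc0, hZc, hzero⟩ :=
          decomp Q i₀ i₁ hq hv hlam hdec (hforce v lam w hdec)
        exact hzero
      refine ⟨⟨Projectivization.mk k lam hlam, ?_⟩,
        v, hv, lam, hlam, w, hw, hmkx, rfl, hdec⟩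
      intro lam2 hlam2 hmk2 j
      rw [Projectivization.mk_eq_mk_iff] at hmk2
      obtain ⟨u, hu⟩ := hmk2
      rw [← hu, Units.smul_def, hsmul, hz j, mul_zero]
    have hB : ∀ y : YT, ∃ x : XT, Rel x y := by
      intro y
      have hz : ∀ j, MvPolynomial.eval (y.1.rep) (Q j) = 0 :=
        y.2 y.1.rep (Projectivization.rep_nonzero y.1) (Projectivization.mk_rep y.1)
      obtain ⟨v, hv, w, hw, hZ, hdec, hrank⟩ :=
        backward Q i₀ i₁ hq (Projectivization.rep_nonzero y.1) hz
      exact ⟨⟨Projectivization.mk k v hv, v, hv, rfl, hrank⟩,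
        v, hv, y.1.rep, Projectivization.rep_nonzero y.1, w, hw, rfl,
        Projectivization.mk_rep y.1, hdec⟩
    have hYuniq : ∀ x y y', Rel x y → Rel x y' → y = y' := by
      rintro x y y' ⟨v, hv, lam, hlam, w, hw, hxv, hylam, hdec⟩
        ⟨v', hv', lam', hlam', w', hw', hxv', hylam', hdec'⟩
      have hmkvv : Projectivization.mk k v hv = Projectivization.mk k v' hv' := by
        rw [hxv, hxv']
      obtain ⟨u, hu⟩ := (Projectivization.mk_eq_mk_iff k _ _ _ _).mp hmkvv
      have hdec2 : ∀ i, alphaF Q i₀ i₁ i v = ((u:k) * lam' i) • w' := by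
        intro i
        rw [← hu, Units.smul_def, map_smul, hdec' i, smul_smul]
      have hmu' : (fun i => (u:k) * lam' i) ≠ 0 := by
        obtain ⟨i, hi⟩ := Function.ne_iff.mp hlam'
        apply Function.ne_iff.mpr
        exact ⟨i, by simpa using mul_ne_zero (Units.ne_zero u) (by simpa using hi)⟩
      obtain ⟨t, ht0, hmu⟩ := eigen_unique hw' hw hmu' (fun i => hdec2 i) (fun i => hdec i)
      -- hmu : ∀ i, lam i = t * ((u:k) * lam' i)
      have hmks : Projectivization.mk k lam hlam = Projectivization.mk k lam' hlam' := by
        rw [Projectivization.mk_eq_mk_iff]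
        refine ⟨Units.mk0 (t * (u:k)) (mul_ne_zero ht0 (Units.ne_zero u)), ?_⟩
        funext i
        rw [Units.smul_def, Pi.smul_apply, smul_eq_mul]
        rw [hmu i, Units.val_mk0]; ring
      apply Subtype.ext
      rw [← hylam, ← hylam', hmks]
    have hXuniq : ∀ x x' y, Rel x y → Rel x' y → x = x' := by
      rintro x x' y ⟨v, hv, lam, hlam, w, hw, hxv, hylam, hdec⟩
        ⟨v', hv', lam', hlam', w', hw', hxv', hylam', hdec'⟩
      have hmkll : Projectivization.mk k lam hlam = Projectivization.mk k lam' hlam' := by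
        rw [hylam, hylam']
      obtain ⟨e, he⟩ := (Projectivization.mk_eq_mk_iff k _ _ _ _).mp hmkll
      -- he : e • lam' = lam
      obtain ⟨c, hc0, hZc, _⟩ := decomp Q i₀ i₁ hq hv hlam hdec (hforce v lam w hdec)
      obtain ⟨c', hc0', hZc', _⟩ := decomp Q i₀ i₁ hq hv' hlam' hdec' (hforce v' lam' w' hdec')
      have hlam'e : ∀ p, lam' p = (e:k)⁻¹ * lam p := by
        intro p
        have := congrFun he p
        rw [Pi.smul_apply, Units.smul_def, smul_eq_mul] at this
        field_simp
        linear_combination this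
      have hveq : v' = (c' * ((e:k)⁻¹ * (e:k)⁻¹) / c) • v := by
        funext idx
        rw [v_eq_Zm v' idx, hZc', Pi.smul_apply, smul_eq_mul, v_eq_Zm v idx, hZc,
          hlam'e, hlam'e]
        field_simp
      have hs0 : c' * ((e:k)⁻¹ * (e:k)⁻¹) / c ≠ 0 := by
        apply div_ne_zero _ hc0
        apply mul_ne_zero hc0'
        apply mul_ne_zero <;> simp [Units.ne_zero]
      have hmkvv : Projectivization.mk k v' hv' = Projectivization.mk k v hv := by
        rw [Projectivization.mk_eq_mk_iff]
        exact ⟨Units.mk0 _ hs0, hveq.symm⟩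
      apply Subtype.ext
      rw [← hxv, ← hxv', hmkvv]
    choose G hG using hA
    have hbij : Function.Bijective G := by
      constructor
      · intro x x' hxx
        exact hXuniq x x' (G x) (hG x) (hxx ▸ hG x')
      · intro y
        obtain ⟨x, hx⟩ := hB y
        exact ⟨x, hYuniq x (G x) y (hG x) hx⟩
    refine ⟨Equiv.ofBijective G hbij, ?_⟩
    intro x v hv hmkv lam hlam hmkl
    obtain ⟨v₀, hv₀, lam₀, hlam₀, w₀, hw₀, hxv₀, hylam₀, hdec₀⟩ := hG x
    have h1 : Projectivization.mk k v hv = Projectivization.mk k v₀ hv₀ := by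
      rw [hmkv, ← hxv₀]
    obtain ⟨u, hu⟩ := (Projectivization.mk_eq_mk_iff k _ _ _ _).mp h1
    have h2 : Projectivization.mk k lam hlam = Projectivization.mk k lam₀ hlam₀ := by
      rw [hmkl]
      have hid : (Equiv.ofBijective G hbij) x = G x := rfl
      rw [hid, ← hylam₀]
    obtain ⟨e, he⟩ := (Projectivization.mk_eq_mk_iff k _ _ _ _).mp h2
    refine ⟨((u:k) * (e:k)⁻¹) • w₀, ?_, ?_⟩
    · apply smul_ne_zero _ hw₀
      apply mul_ne_zero (Units.ne_zero u)
      simp [Units.ne_zero]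
    · intro i
      have hlame : lam i = (e:k) * lam₀ i := by
        have := congrFun he i
        rw [Pi.smul_apply, Units.smul_def, smul_eq_mul] at this
        exact this.symm
      show alphaF Q i₀ i₁ i v = lam i • (((u:k) * (e:k)⁻¹) • w₀)
      rw [← hu, Units.smul_def, map_smul, hdec₀ i, smul_smul, smul_smul]
      congr 1
      rw [hlame]
      field_simp


lemma empty_case (hempty : IsEmpty {y : Projectivization k (Fin n → k) |
      ∀ (lam : Fin n → k) (hlam : lam ≠ 0), Projectivization.mk k lam hlam = y →
        ∀ j, MvPolynomial.eval lam (Q j) = 0}) :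
    ∃ (a b : ℕ) (α : Fin n → ((Fin a → k) →ₗ[k] (Fin b → k))),
      (⨅ i, LinearMap.ker (α i)) = ⊥ ∧
      ∃ F : {x : Projectivization k (Fin a → k) |
                ∃ (v : Fin a → k) (hv : v ≠ 0), Projectivization.mk k v hv = x ∧
                  finrank k (span k (Set.range fun i => α i v)) = 1} ≃
            {y : Projectivization k (Fin n → k) |
                ∀ (lam : Fin n → k) (hlam : lam ≠ 0),
                  Projectivization.mk k lam hlam = y →
                  ∀ j, MvPolynomial.eval lam (Q j) = 0},
        ∀ (x : {x : Projectivization k (Fin a → k) |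
                ∃ (v : Fin a → k) (hv : v ≠ 0), Projectivization.mk k v hv = x ∧
                  finrank k (span k (Set.range fun i => α i v)) = 1})
          (v : Fin a → k) (hv : v ≠ 0),
          Projectivization.mk k v hv = (x : Projectivization k (Fin a → k)) →
          ∀ (lam : Fin n → k) (hlam : lam ≠ 0),
            Projectivization.mk k lam hlam = (F x : Projectivization k (Fin n → k)) →
            ∃ w : Fin b → k, w ≠ 0 ∧ ∀ i, α i v = lam i • w := by
  classical
  haveI hsub : Subsingleton (Fin 0 → k) := ⟨fun a b => funext fun i => i.elim0⟩
  haveI hPempty : IsEmpty (Projectivization k (Fin 0 → k)) :=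
    ⟨fun x => x.rep_nonzero (Subsingleton.elim _ _)⟩
  refine ⟨0, 0, fun _ => 0, ?_, ?_⟩
  · rw [eq_bot_iff]
    intro x _
    rw [Submodule.mem_bot]
    exact Subsingleton.elim _ _
  · haveI hXe : IsEmpty {x : Projectivization k (Fin 0 → k) |
        ∃ (v : Fin 0 → k) (hv : v ≠ 0), Projectivization.mk k v hv = x ∧
          finrank k (span k (Set.range fun i : Fin n => (0 : (Fin 0 → k) →ₗ[k] (Fin 0 → k)) v)) = 1} :=
      ⟨fun x => IsEmpty.false x.1⟩
    refine ⟨Equiv.equivOfIsEmpty _ _, ?_⟩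
    intro x
    exact (IsEmpty.false x).elim

end EigenvectorVarietyAux


/-- Theorem 1: over an algebraically closed field `k`, for any
homogeneous quadratic polynomials `q₁, …, q_m` in `X₁, …, X_n` there is a
reduced matrix pencil `P = (a, b; α₁, …, α_n)` and a bijection from `ε(P)` onto
the projective zero set `{(λ₁ : … : λ_n) ∈ ℙ(k^n) : q_j(λ) = 0 for all j}`
sending the class of an eigenvector to its eigenvalue. -/
theorem every_projective_variety_is_an_eigenvector_variety
    {k : Type*} [Field k] [IsAlgClosed k] {n m : ℕ}
    (q : Fin m → MvPolynomial (Fin n) k) (hq : ∀ j, (q j).IsHomogeneous 2) :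
    ∃ (a b : ℕ) (α : Fin n → ((Fin a → k) →ₗ[k] (Fin b → k))),
      -- `P` is reduced
      (⨅ i, LinearMap.ker (α i)) = ⊥ ∧
      -- a bijection from `ε(P)` onto the projective zero set of `q₁, …, q_m`
      ∃ F : {x : Projectivization k (Fin a → k) |
                ∃ (v : Fin a → k) (hv : v ≠ 0), Projectivization.mk k v hv = x ∧
                  finrank k (span k (Set.range fun i => α i v)) = 1} ≃
            {y : Projectivization k (Fin n → k) |
                ∀ (lam : Fin n → k) (hlam : lam ≠ 0),
                  Projectivization.mk k lam hlam = y →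
                  ∀ j, MvPolynomial.eval lam (q j) = 0},
        -- `F` sends the class of an eigenvector `v` to its eigenvalue:
        -- for every representative `v` of `x` and every representative `lam`
        -- of `F x` there is `w ≠ 0` with `α_i(v) = lam_i • w` for all `i`
        ∀ (x : {x : Projectivization k (Fin a → k) |
                ∃ (v : Fin a → k) (hv : v ≠ 0), Projectivization.mk k v hv = x ∧
                  finrank k (span k (Set.range fun i => α i v)) = 1})
          (v : Fin a → k) (hv : v ≠ 0),
          Projectivization.mk k v hv = (x : Projectivization k (Fin a → k)) →
          ∀ (lam : Fin n → k) (hlam : lam ≠ 0),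
            Projectivization.mk k lam hlam = (F x : Projectivization k (Fin n → k)) →
            ∃ w : Fin b → k, w ≠ 0 ∧ ∀ i, α i v = lam i • w := by
  classical
  by_cases hn2 : 2 ≤ n
  · exact EigenvectorVarietyAux.main q ⟨0, by omega⟩ ⟨1, by omega⟩ hq
      (fun v lam w hdec =>
        EigenvectorVarietyAux.psi0_of_ne q _ _ (by simp [Fin.ext_iff]) v lam w hdec)
  · have hn01 : n = 0 ∨ n = 1 := by omega
    rcases hn01 with h | h
    · subst h
      apply EigenvectorVarietyAux.empty_case
      haveI hsub : Subsingleton (Fin 0 → k) := ⟨fun a b => funext fun i => i.elim0⟩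
      exact ⟨fun y => y.1.rep_nonzero (Subsingleton.elim _ _)⟩
    · subst h
      by_cases hC : ∀ j, MvPolynomial.coeff
          (Finsupp.single (0 : Fin 1) 1 + Finsupp.single (0 : Fin 1) 1) (q j) = 0
      · apply EigenvectorVarietyAux.main q 0 0 hq
        intro v lam w hdec s
        rcases s with pr | j
        · have h12 : pr.1 = pr.2 := Subsingleton.elim _ _
          simp only [EigenvectorVarietyAux.psiF, Sum.elim_inl]
          rw [h12, sub_self]
        · have hC0 : ∀ p r : Fin 1, EigenvectorVarietyAux.Cq q j p r = 0 := by
            intro p r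
            have hp : p = 0 := Subsingleton.elim _ _
            have hr : r = 0 := Subsingleton.elim _ _
            subst hp; subst hr
            simp [EigenvectorVarietyAux.Cq, hC j]
          simp [EigenvectorVarietyAux.psiF, hC0]
      · apply EigenvectorVarietyAux.empty_case
        push_neg at hC
        obtain ⟨j, hj⟩ := hC
        constructor
        intro y
        have heval := y.2 y.1.rep y.1.rep_nonzero (Projectivization.mk_rep y.1) j
        rw [EigenvectorVarietyAux.eval_quadform (q j) (hq j)] at heval
        rw [Fin.sum_univ_one, Fin.sum_univ_one] at heval
        simp only [le_refl, if_true] at heval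
        have hrep : y.1.rep 0 ≠ 0 := by
          intro h0
          apply y.1.rep_nonzero
          funext i
          have hi : i = 0 := Subsingleton.elim _ _
          rw [hi, h0]; rfl
        rcases mul_eq_zero.mp heval with h | h
        · exact hj h
        · rcases mul_eq_zero.mp h with h' | h' <;> exact hrep h'
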